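/- Suppose Hypothesis (H) holds and set c* := (a_2 − 2a_1 + a_1a_2)/(a_1a_2). Then for ν-almost every x ∈ 𝕏, the following identity of measures holds: ∫_𝕏 R_y(B) R_x(dy) = (1 − c*)·R_x(B) + c*·ν(B) for every B ∈ 𝒳. -/

import Mathlib

open MeasureTheory ProbabilityTheory ENNReal

/-- A sequence `X` is exchangeable under `P`: every finite prefix has a
permutation-invariant joint distribution. -/
def Exchangeable {Ω 𝕏 : Type*} [MeasurableSpace Ω] [MeasurableSpace 𝕏]
    (P : Measure Ω) (X : ℕ → Ω → 𝕏) : Prop :=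
  ∀ (n : ℕ) (σ : Equiv.Perm (Fin n)),
    P.map (fun ω (i : Fin n) => X (σ i) ω) = P.map (fun ω (i : Fin n) => X i ω)

/-- The predictive distributions of `X` are
`ℙ(X_{n+1} ∈ ·  | X_1,…,X_n) = (1 - a_n) ν + (a_n/n) ∑_{i=1}^n R_{X_i}` a.s.,
expressed in disintegrated form: for every measurable `B ⊆ 𝕏` and every
measurable set `A` of trajectories of the first `n` coordinates. -/
def PredEq {Ω 𝕏 : Type*} [MeasurableSpace Ω] [MeasurableSpace 𝕏]
    (P : Measure Ω) (X : ℕ → Ω → 𝕏) (ν : Measure 𝕏) (R : Kernel 𝕏 𝕏) (a : ℕ → ℝ) : Prop :=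
  ∀ n : ℕ, 1 ≤ n → ∀ B : Set 𝕏, MeasurableSet B → ∀ A : Set (Fin n → 𝕏), MeasurableSet A →
    P {ω | (fun i : Fin n => X i ω) ∈ A ∧ X n ω ∈ B} =
      ∫⁻ x in A, (ENNReal.ofReal (1 - a n) * ν B
          + (ENNReal.ofReal (a n) / (n : ℝ≥0∞)) * ∑ i : Fin n, R (x i) B)
        ∂(P.map (fun ω (i : Fin n) => X i ω))

/-- Hypothesis (H): `X` is exchangeable with marginal distribution `ν`, `R` is a
probability kernel, and the predictive distributions are as in `PredEq` with
constants `a n ∈ (0,1)`. -/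
structure HypH {Ω 𝕏 : Type*} [MeasurableSpace Ω] [MeasurableSpace 𝕏]
    (P : Measure Ω) (X : ℕ → Ω → 𝕏) (ν : Measure 𝕏) (R : Kernel 𝕏 𝕏) (a : ℕ → ℝ) : Prop where
  probP : IsProbabilityMeasure P
  probν : IsProbabilityMeasure ν
  markov : IsMarkovKernel R
  meas : ∀ n, Measurable (X n)
  exch : Exchangeable P X
  marginal : ∀ n, P.map (X n) = ν
  a_mem : ∀ n, 1 ≤ n → a n ∈ Set.Ioo (0 : ℝ) 1
  pred : PredEq P X ν R a

/-- `X` is a measure-valued Pólya urn sequence with parameters `(θ, ν, R)`. -/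
def IsMVPS {Ω 𝕏 : Type*} [MeasurableSpace Ω] [MeasurableSpace 𝕏]
    (P : Measure Ω) (X : ℕ → Ω → 𝕏) (θ : ℝ) (ν : Measure 𝕏) (R : Kernel 𝕏 𝕏) : Prop :=
  0 < θ ∧ P.map (X 0) = ν ∧
  ∀ n : ℕ, 1 ≤ n → ∀ B : Set 𝕏, MeasurableSet B → ∀ A : Set (Fin n → 𝕏), MeasurableSet A →
    P {ω | (fun i : Fin n => X i ω) ∈ A ∧ X n ω ∈ B} =
      ∫⁻ x in A, ((ENNReal.ofReal θ * ν B + ∑ i : Fin n, R (x i) B)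
          / (ENNReal.ofReal θ + (n : ℝ≥0∞)))
        ∂(P.map (fun ω (i : Fin n) => X i ω))

/-- A countably generated measurable space admits a countable generating π-system
consisting of measurable sets. -/
lemma ksq_exists_piSystem (α : Type*) [m : MeasurableSpace α]
    [MeasurableSpace.CountablyGenerated α] :
    ∃ C : Set (Set α), C.Countable ∧ IsPiSystem C ∧ m = MeasurableSpace.generateFrom C ∧
      ∀ t ∈ C, MeasurableSet t := by
  set s := MeasurableSpace.natGeneratingSequence α with hs
  refine ⟨Set.range (fun F : Finset ℕ => ⋂ i ∈ F, s i), Set.countable_range _, ?_, ?_, ?_⟩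
  · rintro _ ⟨F, rfl⟩ _ ⟨G, rfl⟩ -
    refine ⟨F ∪ G, ?_⟩
    ext x
    simp [Set.mem_iInter, Finset.mem_union, or_imp, forall_and]
  · refine le_antisymm ?_ (MeasurableSpace.generateFrom_le ?_)
    · conv_lhs => rw [← MeasurableSpace.generateFrom_natGeneratingSequence α]
      refine MeasurableSpace.generateFrom_mono ?_
      rintro _ ⟨n, rfl⟩
      exact ⟨{n}, by simp [hs]⟩
    · rintro _ ⟨F, rfl⟩
      exact MeasurableSet.biInter (Set.to_countable _)
        (fun i _ => MeasurableSpace.measurableSet_natGeneratingSequence i)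
  · rintro _ ⟨F, rfl⟩
    exact MeasurableSet.biInter (Set.to_countable _)
      (fun i _ => MeasurableSpace.measurableSet_natGeneratingSequence i)

/-- under Hypothesis (H), with `c* = (a₂ - 2a₁ + a₁a₂)/(a₁a₂)`,
for ν-a.e. `x`: `∫ R_y(B) R_x(dy) = (1 - c*) R_x(B) + c* ν(B)` for every measurable `B`. -/
theorem kernel_square_identity {Ω 𝕏 : Type*} [MeasurableSpace Ω] [MeasurableSpace 𝕏]
    [StandardBorelSpace 𝕏]
    (P : Measure Ω) (X : ℕ → Ω → 𝕏) (ν : Measure 𝕏) (R : Kernel 𝕏 𝕏) (a : ℕ → ℝ)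
    (hH : HypH P X ν R a) :
    ∀ᵐ x ∂ν, ∀ B : Set 𝕏, MeasurableSet B →
      ∫ y, (R y B).toReal ∂(R x) =
        (1 - (a 2 - 2 * a 1 + a 1 * a 2) / (a 1 * a 2)) * (R x B).toReal
          + (a 2 - 2 * a 1 + a 1 * a 2) / (a 1 * a 2) * (ν B).toReal := by
  haveI := hH.probP
  haveI := hH.probν
  haveI := hH.markov
  obtain ⟨ha1pos, ha1lt⟩ := hH.a_mem 1 le_rfl
  obtain ⟨ha2pos, ha2lt⟩ := hH.a_mem 2 (by norm_num)
  have hX : ∀ n, Measurable (X n) := hH.meas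
  have hXn : ∀ n : ℕ, Measurable fun ω (i : Fin n) => X i ω :=
    fun n => measurable_pi_lambda _ fun i => hX i
  haveI : IsProbabilityMeasure (P.map (fun ω (i : Fin 1) => X i ω)) := Measure.isProbabilityMeasure_map (hXn 1).aemeasurable
  haveI : IsProbabilityMeasure (P.map (fun ω (i : Fin 2) => X i ω)) := Measure.isProbabilityMeasure_map (hXn 2).aemeasurable
  have hmapeval : ∀ (n : ℕ) (i : Fin n),
      (P.map (fun ω (j : Fin n) => X j ω)).map (fun p => p i) = ν := by
    intro n i
    rw [Measure.map_map (measurable_pi_apply i) (hXn n)]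
    exact hH.marginal i
  -- boundedness facts
  have hTle : ∀ (B : Set 𝕏) (x : 𝕏), (∫⁻ y, R y B ∂(R x)) ≤ 1 := by
    intro B x
    calc ∫⁻ y, R y B ∂(R x) ≤ ∫⁻ _, 1 ∂(R x) := lintegral_mono fun y => prob_le_one
    _ = 1 := by simp
  have hTne : ∀ (B : Set 𝕏) (x : 𝕏), (∫⁻ y, R y B ∂(R x)) ≠ ⊤ :=
    fun B x => (lt_of_le_of_lt (hTle B x) one_lt_top).ne
  have hTmeas : ∀ B : Set 𝕏, MeasurableSet B →
      Measurable fun x => ∫⁻ y, R y B ∂(R x) := by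
    intro B hB
    exact Measurable.lintegral_kernel_prod_right'
      ((R.measurable_coe hB).comp measurable_snd)
  -- Step A : ∫ R_y(B) ν(dy) = ν B
  have hI : ∀ B : Set 𝕏, MeasurableSet B → ∫⁻ y, R y B ∂ν = ν B := by
    intro B hB
    have hp := hH.pred 1 le_rfl B hB Set.univ MeasurableSet.univ
    simp only [Set.mem_univ, true_and, Measure.restrict_univ, Nat.cast_one,
      div_one, Fin.sum_univ_one] at hp
    have hL : P {ω | X 1 ω ∈ B} = ν B := by
      rw [← hH.marginal 1, Measure.map_apply (hX 1) hB]; rfl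
    have hu : Measurable fun x : Fin 1 → 𝕏 => R (x 0) B :=
      (R.measurable_coe hB).comp (measurable_pi_apply 0)
    rw [hL, lintegral_add_left measurable_const, lintegral_const, measure_univ, mul_one,
      lintegral_const_mul _ hu] at hp
    have he : ∫⁻ x, R (x 0) B ∂(P.map (fun ω (i : Fin 1) => X i ω)) = ∫⁻ y, R y B ∂ν := by
      conv_rhs => rw [← hmapeval 1 0]
      rw [lintegral_map (R.measurable_coe hB) (measurable_pi_apply 0)]
    rw [he] at hp
    -- hp : ν B = ofReal (1 - a 1) * ν B + ofReal (a 1) * ∫⁻ y, R y B ∂ν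
    have hiLe : (∫⁻ y, R y B ∂ν) ≤ 1 := by
      calc ∫⁻ y, R y B ∂ν ≤ ∫⁻ _, 1 ∂ν := lintegral_mono fun y => prob_le_one
      _ = 1 := by simp
    have hine : (∫⁻ y, R y B ∂ν) ≠ ⊤ := (lt_of_le_of_lt hiLe one_lt_top).ne
    have hνne : ν B ≠ ⊤ := measure_ne_top ν B
    have hre := congrArg ENNReal.toReal hp
    rw [ENNReal.toReal_add (ENNReal.mul_ne_top ENNReal.ofReal_ne_top hνne)
        (ENNReal.mul_ne_top ENNReal.ofReal_ne_top hine), ENNReal.toReal_mul,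
      ENNReal.toReal_mul, ENNReal.toReal_ofReal (by linarith),
      ENNReal.toReal_ofReal (le_of_lt ha1pos)] at hre
    refine (ENNReal.toReal_eq_toReal_iff' hine hνne).mp ?_
    nlinarith [hre]
  -- Step B : joint law of (X 0, X 1)
  have hJ : ∀ A₀ : Set 𝕏, MeasurableSet A₀ → ∀ B' : Set 𝕏, MeasurableSet B' →
      P {ω | X 0 ω ∈ A₀ ∧ X 1 ω ∈ B'} =
        ∫⁻ x in A₀, (ENNReal.ofReal (1 - a 1) * ν B' + ENNReal.ofReal (a 1) * R x B') ∂ν := by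
    intro A₀ hA₀ B' hB'
    have hp := hH.pred 1 le_rfl B' hB' ((fun p : Fin 1 → 𝕏 => p 0) ⁻¹' A₀)
      ((measurable_pi_apply 0) hA₀)
    simp only [Nat.cast_one, div_one, Fin.sum_univ_one] at hp
    have hset : {ω | (fun i : Fin 1 => X i ω) ∈ (fun p : Fin 1 → 𝕏 => p 0) ⁻¹' A₀ ∧ X 1 ω ∈ B'}
        = {ω | X 0 ω ∈ A₀ ∧ X 1 ω ∈ B'} := rfl
    rw [hset] at hp
    rw [hp]
    have hf : Measurable fun z : 𝕏 =>
        ENNReal.ofReal (1 - a 1) * ν B' + ENNReal.ofReal (a 1) * R z B' :=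
      measurable_const.add ((R.measurable_coe hB').const_mul _)
    have hmap := setLIntegral_map (μ := P.map (fun ω (i : Fin 1) => X i ω))
      hA₀ hf (measurable_pi_apply (0 : Fin 1))
    rw [hmapeval 1 0] at hmap
    exact hmap.symm
  -- Step D : exchangeability swap of coordinates 1 and 2
  have hEx : ∀ A₀ : Set 𝕏, MeasurableSet A₀ → ∀ B : Set 𝕏, MeasurableSet B →
      P {ω | X 0 ω ∈ A₀ ∧ X 2 ω ∈ B} = P {ω | X 0 ω ∈ A₀ ∧ X 1 ω ∈ B} := by
    intro A₀ hA₀ B hB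
    set σ : Equiv.Perm (Fin 3) := Equiv.swap 1 2 with hσ
    have h := hH.exch 3 σ
    set S : Set (Fin 3 → 𝕏) :=
      (fun p : Fin 3 → 𝕏 => p 0) ⁻¹' A₀ ∩ (fun p : Fin 3 → 𝕏 => p 2) ⁻¹' B with hS
    have hSm : MeasurableSet S :=
      ((measurable_pi_apply 0) hA₀).inter ((measurable_pi_apply 2) hB)
    have hσmeas : Measurable fun ω (i : Fin 3) => X (σ i) ω :=
      measurable_pi_lambda _ fun i => hX _
    have h1 := congrArg (fun μ : Measure (Fin 3 → 𝕏) => μ S) h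
    rw [Measure.map_apply hσmeas hSm, Measure.map_apply (hXn 3) hSm] at h1
    have hσ0 : σ 0 = 0 := by decide
    have hσ2 : σ 2 = 1 := by decide
    have hpre1 : (fun ω (i : Fin 3) => X (σ i) ω) ⁻¹' S = {ω | X 0 ω ∈ A₀ ∧ X 1 ω ∈ B} := by
      ext ω
      simp only [Set.mem_preimage, hS, Set.mem_inter_iff, Set.mem_setOf_eq, hσ0, hσ2]
      exact Iff.rfl
    have hpre2 : (fun ω (i : Fin 3) => X i ω) ⁻¹' S = {ω | X 0 ω ∈ A₀ ∧ X 2 ω ∈ B} := rfl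
    rw [hpre1, hpre2] at h1
    exact h1.symm
  -- Step C : the (x 1)-integral over the joint law of (X 0, X 1)
  have hC : ∀ A₀ : Set 𝕏, MeasurableSet A₀ → ∀ B : Set 𝕏, MeasurableSet B →
      ∫⁻ p in (fun p : Fin 2 → 𝕏 => p 0) ⁻¹' A₀, R (p 1) B ∂(P.map (fun ω (i : Fin 2) => X i ω)) =
        ∫⁻ x in A₀, (ENNReal.ofReal (1 - a 1) * ν B
          + ENNReal.ofReal (a 1) * ∫⁻ y, R y B ∂(R x)) ∂ν := by
    intro A₀ hA₀ B hB
    set κf : 𝕏 → Measure 𝕏 :=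
      fun x => ENNReal.ofReal (1 - a 1) • ν + ENNReal.ofReal (a 1) • (R x) with hκf
    have hκapp : ∀ (x : 𝕏) (s : Set 𝕏),
        κf x s = ENNReal.ofReal (1 - a 1) * ν s + ENNReal.ofReal (a 1) * R x s := by
      intro x s
      simp [hκf, Measure.add_apply, Measure.smul_apply, smul_eq_mul]
    have hκmeas : Measurable κf := by
      apply Measure.measurable_of_measurable_coe
      intro s hs
      simp only [hκapp]
      exact measurable_const.add ((R.measurable_coe hs).const_mul _)
    have hm : (((P.map (fun ω (i : Fin 2) => X i ω)).restrict ((fun p : Fin 2 → 𝕏 => p 0) ⁻¹' A₀)).map (fun p => p 1))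
        = (ν.restrict A₀).bind κf := by
      ext s hs
      rw [Measure.map_apply (measurable_pi_apply 1) hs,
        Measure.restrict_apply ((measurable_pi_apply 1) hs),
        Measure.bind_apply hs hκmeas.aemeasurable]
      have hμ2app : (P.map (fun ω (i : Fin 2) => X i ω)) ((fun p : Fin 2 → 𝕏 => p 1) ⁻¹' s ∩ (fun p : Fin 2 → 𝕏 => p 0) ⁻¹' A₀)
          = P {ω | X 0 ω ∈ A₀ ∧ X 1 ω ∈ s} := by
        rw [Measure.map_apply (hXn 2)
          (((measurable_pi_apply 1) hs).inter ((measurable_pi_apply 0) hA₀))]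
        congr 1
        ext ω
        simp only [Set.mem_preimage, Set.mem_inter_iff, Set.mem_setOf_eq, and_comm]
        exact Iff.rfl
      rw [hμ2app, hJ A₀ hA₀ s hs]
      refine lintegral_congr fun x => ?_
      rw [hκapp]
    calc ∫⁻ p in (fun p : Fin 2 → 𝕏 => p 0) ⁻¹' A₀, R (p 1) B ∂(P.map (fun ω (i : Fin 2) => X i ω))
        = ∫⁻ y, R y B ∂(((P.map (fun ω (i : Fin 2) => X i ω)).restrict ((fun p : Fin 2 → 𝕏 => p 0) ⁻¹' A₀)).map (fun p => p 1)) := by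
          rw [lintegral_map (R.measurable_coe hB) (measurable_pi_apply 1)]
      _ = ∫⁻ y, R y B ∂((ν.restrict A₀).bind κf) := by rw [hm]
      _ = ∫⁻ x, (∫⁻ y, R y B ∂(κf x)) ∂(ν.restrict A₀) :=
          Measure.lintegral_bind hκmeas.aemeasurable (R.measurable_coe hB).aemeasurable
      _ = ∫⁻ x in A₀, (ENNReal.ofReal (1 - a 1) * ν B
            + ENNReal.ofReal (a 1) * ∫⁻ y, R y B ∂(R x)) ∂ν := by
          refine lintegral_congr fun x => ?_
          simp only [hκf, lintegral_add_measure, lintegral_smul_measure, smul_eq_mul]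
          rw [hI B hB]
  -- Step E : for each fixed B, the a.e. identity
  set c : ℝ := (a 2 - 2 * a 1 + a 1 * a 2) / (a 1 * a 2) with hc
  have hE : ∀ B : Set 𝕏, MeasurableSet B → ∀ᵐ x ∂ν,
      (∫⁻ y, R y B ∂(R x)).toReal
        = (1 - c) * (R x B).toReal + c * (ν B).toReal := by
    intro B hB
    set c2 : ℝ≥0∞ := ENNReal.ofReal (a 2) / 2 with hc2
    set f : 𝕏 → ℝ≥0∞ :=
      fun x => ENNReal.ofReal (1 - a 1) * ν B + ENNReal.ofReal (a 1) * R x B with hf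
    set g : 𝕏 → ℝ≥0∞ := fun x => ENNReal.ofReal (1 - a 2) * ν B + c2 * R x B
      + c2 * (ENNReal.ofReal (1 - a 1) * ν B
          + ENNReal.ofReal (a 1) * ∫⁻ y, R y B ∂(R x)) with hg
    have hfm : Measurable f := measurable_const.add ((R.measurable_coe hB).const_mul _)
    have hgm : Measurable g := by
      refine (measurable_const.add ((R.measurable_coe hB).const_mul _)).add ?_
      exact (measurable_const.add ((hTmeas B hB).const_mul _)).const_mul _
    have hfg : ∀ s : Set 𝕏, MeasurableSet s →
        ∫⁻ x in s, f x ∂ν = ∫⁻ x in s, g x ∂ν := by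
      intro s hs
      have h1 : ∫⁻ x in s, f x ∂ν = P {ω | X 0 ω ∈ s ∧ X 2 ω ∈ B} := by
        rw [← hJ s hs B hB, hEx s hs B hB]
      have hp := hH.pred 2 (by norm_num) B hB ((fun p : Fin 2 → 𝕏 => p 0) ⁻¹' s)
        ((measurable_pi_apply 0) hs)
      have hset : {ω | (fun i : Fin 2 => X i ω) ∈ (fun p : Fin 2 → 𝕏 => p 0) ⁻¹' s ∧ X 2 ω ∈ B}
          = {ω | X 0 ω ∈ s ∧ X 2 ω ∈ B} := rfl
      rw [hset] at hp
      rw [h1, hp]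
      have hcast : ((2 : ℕ) : ℝ≥0∞) = 2 := by norm_num
      simp only [Fin.sum_univ_two, hcast, ← hc2]
      -- decompose the integral over `Ahat`
      have hu0 : Measurable fun p : Fin 2 → 𝕏 => R (p 0) B :=
        (R.measurable_coe hB).comp (measurable_pi_apply 0)
      have hu1 : Measurable fun p : Fin 2 → 𝕏 => R (p 1) B :=
        (R.measurable_coe hB).comp (measurable_pi_apply 1)
      have hsplit : ∀ p : Fin 2 → 𝕏,
          ENNReal.ofReal (1 - a 2) * ν B + c2 * (R (p 0) B + R (p 1) B)
            = (ENNReal.ofReal (1 - a 2) * ν B + c2 * R (p 0) B) + c2 * R (p 1) B := by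
        intro p; rw [mul_add, add_assoc]
      simp only [hsplit]
      rw [lintegral_add_left (f := fun p : Fin 2 → 𝕏 => ENNReal.ofReal (1 - a 2) * ν B + c2 * R (p 0) B)
          (measurable_const.add (hu0.const_mul _)),
        lintegral_add_left measurable_const, setLIntegral_const,
        lintegral_const_mul _ hu0, lintegral_const_mul _ hu1]
      have hA : (P.map (fun ω (i : Fin 2) => X i ω)) ((fun p : Fin 2 → 𝕏 => p 0) ⁻¹' s) = ν s := by
        conv_rhs => rw [← hmapeval 2 0]
        rw [Measure.map_apply (measurable_pi_apply 0) hs]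
      have hB0 : ∫⁻ p in (fun p : Fin 2 → 𝕏 => p 0) ⁻¹' s, R (p 0) B ∂(P.map (fun ω (i : Fin 2) => X i ω))
          = ∫⁻ z in s, R z B ∂ν := by
        conv_rhs => rw [← hmapeval 2 0]
        rw [setLIntegral_map hs (R.measurable_coe hB) (measurable_pi_apply 0)]
      rw [hA, hB0, hC s hs B hB]
      -- now reassemble the RHS as a single integral of g
      have hgm1 : Measurable fun x : 𝕏 => ENNReal.ofReal (1 - a 1) * ν B
          + ENNReal.ofReal (a 1) * ∫⁻ y, R y B ∂(R x) :=
        measurable_const.add ((hTmeas B hB).const_mul _)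
      have hR2 : ∫⁻ x in s, g x ∂ν
          = ENNReal.ofReal (1 - a 2) * ν B * ν s + c2 * ∫⁻ z in s, R z B ∂ν
            + c2 * ∫⁻ x in s, (ENNReal.ofReal (1 - a 1) * ν B
                + ENNReal.ofReal (a 1) * ∫⁻ y, R y B ∂(R x)) ∂ν := by
        simp only [hg]
        rw [lintegral_add_left (f := fun x : 𝕏 => ENNReal.ofReal (1 - a 2) * ν B + c2 * R x B)
          (measurable_const.add ((R.measurable_coe hB).const_mul _)),
          lintegral_add_left measurable_const, setLIntegral_const,
          lintegral_const_mul _ (R.measurable_coe hB), lintegral_const_mul _ hgm1]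
      rw [hR2]
    have hae : f =ᵐ[ν] g :=
      ae_eq_of_forall_setLIntegral_eq_of_sigmaFinite hfm hgm
        (fun s hs _ => hfg s hs)
    filter_upwards [hae] with x hx
    -- convert the ENNReal identity to the real identity
    have hνne : ν B ≠ ⊤ := measure_ne_top ν B
    have hRne : R x B ≠ ⊤ := measure_ne_top (R x) B
    have hTne' : (∫⁻ y, R y B ∂(R x)) ≠ ⊤ := hTne B x
    have hc2ne : c2 ≠ ⊤ := by
      rw [hc2]
      exact (ENNReal.div_lt_top ENNReal.ofReal_ne_top (by norm_num)).ne
    have n1 : ENNReal.ofReal (1 - a 1) * ν B ≠ ⊤ :=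
      ENNReal.mul_ne_top ENNReal.ofReal_ne_top hνne
    have n2 : ENNReal.ofReal (a 1) * R x B ≠ ⊤ :=
      ENNReal.mul_ne_top ENNReal.ofReal_ne_top hRne
    have n3 : ENNReal.ofReal (1 - a 2) * ν B ≠ ⊤ :=
      ENNReal.mul_ne_top ENNReal.ofReal_ne_top hνne
    have n4 : c2 * R x B ≠ ⊤ := ENNReal.mul_ne_top hc2ne hRne
    have n5 : ENNReal.ofReal (a 1) * (∫⁻ y, R y B ∂(R x)) ≠ ⊤ :=
      ENNReal.mul_ne_top ENNReal.ofReal_ne_top hTne'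
    have n6 : ENNReal.ofReal (1 - a 1) * ν B
        + ENNReal.ofReal (a 1) * (∫⁻ y, R y B ∂(R x)) ≠ ⊤ :=
      ENNReal.add_ne_top.2 ⟨n1, n5⟩
    have n7 : c2 * (ENNReal.ofReal (1 - a 1) * ν B
        + ENNReal.ofReal (a 1) * (∫⁻ y, R y B ∂(R x))) ≠ ⊤ := ENNReal.mul_ne_top hc2ne n6
    have hre := congrArg ENNReal.toReal hx
    simp only [hf, hg] at hre
    simp only [ENNReal.toReal_add n1 n2,
      ENNReal.toReal_add (ENNReal.add_ne_top.2 ⟨n3, n4⟩) n7,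
      ENNReal.toReal_add n3 n4, ENNReal.toReal_add n1 n5, ENNReal.toReal_mul,
      ENNReal.toReal_div,
      ENNReal.toReal_ofReal (show (0:ℝ) ≤ 1 - a 1 by linarith),
      ENNReal.toReal_ofReal (show (0:ℝ) ≤ 1 - a 2 by linarith),
      ENNReal.toReal_ofReal (le_of_lt ha1pos), ENNReal.toReal_ofReal (le_of_lt ha2pos)] at hre
    simp only [hc2, ENNReal.toReal_div, ENNReal.toReal_ofReal (le_of_lt ha2pos)] at hre
    have h2 : (2 : ℝ≥0∞).toReal = 2 := by norm_num
    rw [h2] at hre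
    set v : ℝ := (ν B).toReal
    set r : ℝ := (R x B).toReal
    set t : ℝ := (∫⁻ y, R y B ∂(R x)).toReal
    -- hre : (1 - a 1) * v + a 1 * r = (1 - a 2) * v + a 2 / 2 * r + a 2 / 2 * ((1 - a 1) * v + a 1 * t)
    have ha1ne : a 1 ≠ 0 := ne_of_gt ha1pos
    have ha2ne : a 2 ≠ 0 := ne_of_gt ha2pos
    rw [hc]
    field_simp
    nlinarith [hre]
  -- Final assembly via a countable generating π-system
  obtain ⟨C, hCc, hCpi, hCgen, hCmeas⟩ := ksq_exists_piSystem 𝕏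
  have hall : ∀ᵐ x ∂ν, ∀ t ∈ C,
      (∫⁻ y, R y t ∂(R x)).toReal
        = (1 - c) * (R x t).toReal + c * (ν t).toReal :=
    (ae_ball_iff hCc).2 fun t ht => hE t (hCmeas t ht)
  filter_upwards [hall] with x hx
  intro B hB
  -- two finite measures agreeing on the π-system
  set cp : ℝ := max c 0 with hcp
  set cm : ℝ := max (-c) 0 with hcm
  set dp : ℝ := max (1 - c) 0 with hdp
  set dm : ℝ := max (-(1 - c)) 0 with hdm
  have hcpm : cp - cm = c := by
    rw [hcp, hcm]
    rcases le_total 0 c with h | h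
    · rw [max_eq_left h, max_eq_right (by linarith : -c ≤ 0)]; ring
    · rw [max_eq_right h, max_eq_left (by linarith : (0:ℝ) ≤ -c)]; ring
  have hdpm : dp - dm = 1 - c := by
    rw [hdp, hdm]
    rcases le_total 0 (1 - c) with h | h
    · rw [max_eq_left h, max_eq_right (by linarith : -(1 - c) ≤ 0)]; ring
    · rw [max_eq_right h, max_eq_left (by linarith : (0:ℝ) ≤ -(1 - c))]; ring
  have hcp0 : 0 ≤ cp := le_max_right _ _
  have hcm0 : 0 ≤ cm := le_max_right _ _
  have hdp0 : 0 ≤ dp := le_max_right _ _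
  have hdm0 : 0 ≤ dm := le_max_right _ _
  set μL : Measure 𝕏 := (R x).bind (fun y => R y) + ENNReal.ofReal cm • ν
    + ENNReal.ofReal dm • (R x) with hμL
  set μR : Measure 𝕏 := ENNReal.ofReal dp • (R x) + ENNReal.ofReal cp • ν with hμR
  have happL : ∀ s : Set 𝕏, MeasurableSet s →
      μL s = (∫⁻ y, R y s ∂(R x)) + ENNReal.ofReal cm * ν s + ENNReal.ofReal dm * R x s := by
    intro s hs
    simp only [hμL]
    simp [Measure.add_apply, Measure.smul_apply, smul_eq_mul,
      Measure.bind_apply hs R.measurable.aemeasurable]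
  have happR : ∀ s : Set 𝕏, MeasurableSet s →
      μR s = ENNReal.ofReal dp * R x s + ENNReal.ofReal cp * ν s := by
    intro s hs
    simp only [hμR]
    simp [Measure.add_apply, Measure.smul_apply, smul_eq_mul]
  have hiff : ∀ s : Set 𝕏, MeasurableSet s →
      (μL s = μR s ↔ (∫⁻ y, R y s ∂(R x)).toReal
        = (1 - c) * (R x s).toReal + c * (ν s).toReal) := by
    intro s hs
    rw [happL s hs, happR s hs]
    have m0 : (∫⁻ y, R y s ∂(R x)) ≠ ⊤ := hTne s x
    have m1 : ENNReal.ofReal cm * ν s ≠ ⊤ :=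
      ENNReal.mul_ne_top ENNReal.ofReal_ne_top (measure_ne_top ν s)
    have m2 : ENNReal.ofReal dm * R x s ≠ ⊤ :=
      ENNReal.mul_ne_top ENNReal.ofReal_ne_top (measure_ne_top (R x) s)
    have m3 : ENNReal.ofReal dp * R x s ≠ ⊤ :=
      ENNReal.mul_ne_top ENNReal.ofReal_ne_top (measure_ne_top (R x) s)
    have m4 : ENNReal.ofReal cp * ν s ≠ ⊤ :=
      ENNReal.mul_ne_top ENNReal.ofReal_ne_top (measure_ne_top ν s)
    have h1 : (∫⁻ y, R y s ∂(R x)) + ENNReal.ofReal cm * ν s + ENNReal.ofReal dm * R x s ≠ ⊤ :=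
      ENNReal.add_ne_top.2 ⟨ENNReal.add_ne_top.2 ⟨m0, m1⟩, m2⟩
    have h2 : ENNReal.ofReal dp * R x s + ENNReal.ofReal cp * ν s ≠ ⊤ :=
      ENNReal.add_ne_top.2 ⟨m3, m4⟩
    rw [← ENNReal.toReal_eq_toReal_iff' h1 h2]
    simp only [ENNReal.toReal_add (ENNReal.add_ne_top.2 ⟨m0, m1⟩) m2,
      ENNReal.toReal_add m0 m1, ENNReal.toReal_add m3 m4, ENNReal.toReal_mul,
      ENNReal.toReal_ofReal hcm0, ENNReal.toReal_ofReal hdm0,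
      ENNReal.toReal_ofReal hdp0, ENNReal.toReal_ofReal hcp0]
    constructor
    · intro h
      linear_combination h + (R x s).toReal * hdpm + (ν s).toReal * hcpm
    · intro h
      linear_combination h - (R x s).toReal * hdpm - (ν s).toReal * hcpm
  haveI : IsFiniteMeasure μL := by
    constructor
    rw [happL Set.univ MeasurableSet.univ]
    refine lt_top_iff_ne_top.2 (ENNReal.add_ne_top.2 ⟨ENNReal.add_ne_top.2 ⟨hTne _ x, ?_⟩, ?_⟩)
    · exact ENNReal.mul_ne_top ENNReal.ofReal_ne_top (measure_ne_top ν _)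
    · exact ENNReal.mul_ne_top ENNReal.ofReal_ne_top (measure_ne_top (R x) _)
  have hLR : μL = μR := by
    refine ext_of_generate_finite C hCgen hCpi (fun s hsC => ?_) ?_
    · exact (hiff s (hCmeas s hsC)).2 (hx s hsC)
    · refine (hiff Set.univ MeasurableSet.univ).2 ?_
      have hT1 : (∫⁻ y, R y Set.univ ∂(R x)) = 1 := by
        simp [measure_univ]
      rw [hT1, measure_univ, measure_univ]
      simp
  have hkey : (∫⁻ y, R y B ∂(R x)).toReal
      = (1 - c) * (R x B).toReal + c * (ν B).toReal :=
    (hiff B hB).1 (by rw [hLR])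
  have hint : ∫ y, (R y B).toReal ∂(R x) = (∫⁻ y, R y B ∂(R x)).toReal := by
    refine integral_toReal ((R.measurable_coe hB).aemeasurable) ?_
    exact Filter.Eventually.of_forall fun y => measure_lt_top (R y) B
  rw [hint, hkey, hc]
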